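/- arXiv:1806.11028 — 2 statements merged into one kernel-verified Lean document; each statement's English description precedes it below -/
import Mathlib

section
/- Let A ∈ Mat_n(𝕋) and let τ ∈ S_n be a permutation with ω(τ) = Σ_i A_{i,τ(i)} > −∞. For each index i, let μ_i be the average weight of the unique cycle of τ containing i (i.e., (Σ_{j in that cycle} A_{j,τ(j)})/length). Suppose that every simple cycle θ of the digraph G(A) that is not a cycle of τ satisfies ω(θ) < Σ_{i ∈ θ} μ_i. Then A is nonsingular and τ is the unique permutation attaining per(A). -/
attribute [local instance] Classical.propDecidable

/-- The tropical (max-plus) semiring carrier: `ℝ ∪ {−∞}`. -/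
abbrev Trop : Type := WithBot ℝ

/-- Tropical matrix multiplication: `(A ⊙ B)_{i,j} = max_k (A_{i,k} + B_{k,j})`. -/
def tmul {n m p : ℕ} (A : Matrix (Fin n) (Fin m) Trop) (B : Matrix (Fin m) (Fin p) Trop) :
    Matrix (Fin n) (Fin p) Trop :=
  fun i j => Finset.univ.sup (fun k => A i k + B k j)

/-- The tropical identity matrix. -/
def tId (n : ℕ) : Matrix (Fin n) (Fin n) Trop :=
  fun i j => if i = j then (0 : Trop) else ⊥

/-- Tropical matrix power. -/
def tPow {n : ℕ} (A : Matrix (Fin n) (Fin n) Trop) : ℕ → Matrix (Fin n) (Fin n) Trop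
  | 0 => tId n
  | t + 1 => tmul A (tPow A t)

/-- Weight of a permutation: `ω(π) = Σ_i A_{i,π(i)}`. -/
def permWeight {n : ℕ} (A : Matrix (Fin n) (Fin n) Trop) (π : Equiv.Perm (Fin n)) : Trop :=
  ∑ i, A i (π i)

/-- Tropical permanent: `per(A) = max_π ω(π)`. -/
def tPer {n : ℕ} (A : Matrix (Fin n) (Fin n) Trop) : Trop :=
  Finset.univ.sup (fun π : Equiv.Perm (Fin n) => permWeight A π)

/-- Nonsingular: exactly one permutation attains the permanent. -/
def Nonsingular {n : ℕ} (A : Matrix (Fin n) (Fin n) Trop) : Prop :=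
  ∃! π : Equiv.Perm (Fin n), permWeight A π = tPer A

/-- Tropical rank: the largest `k` such that `A` has a nonsingular `k × k` submatrix. -/
noncomputable def tropRank {n : ℕ} (A : Matrix (Fin n) (Fin n) Trop) : ℕ :=
  sSup {k : ℕ | ∃ (r : Fin k → Fin n) (c : Fin k → Fin n),
    Function.Injective r ∧ Function.Injective c ∧
    Nonsingular (fun i j => A (r i) (c j))}

/-- Factor rank: the smallest `k` such that `A = B ⊙ C` with `B` of size `n × k` and `C` of
size `k × n`. -/
noncomputable def facRank {n : ℕ} (A : Matrix (Fin n) (Fin n) Trop) : ℕ :=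
  sInf {k : ℕ | ∃ (B : Matrix (Fin n) (Fin k) Trop) (C : Matrix (Fin k) (Fin n) Trop),
    A = tmul B C}

/-- Trace: `tr(A) = Σ_i A_{i,i}` in `ℝ ∪ {−∞}`. -/
def tTrace {n : ℕ} (A : Matrix (Fin n) (Fin n) Trop) : Trop := ∑ i, A i i

/-- Evaluation of a word over the alphabet `{a, b}` (with `a = true`, `b = false`) at the
pair of tropical matrices `(A, B)`, i.e. `a ↦ A`, `b ↦ B`.  (On the empty word it returns
the identity matrix; we only use it on nonempty words.) -/
def mEval {n : ℕ} (A B : Matrix (Fin n) (Fin n) Trop) : List Bool → Matrix (Fin n) (Fin n) Trop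
  | [] => tId n
  | x :: w => tmul (if x then A else B) (mEval A B w)

/-- `lcm(1, 2, …, n)`. -/
def nbar (n : ℕ) : ℕ := (Finset.Icc 1 n).lcm id

/-- A walk on the digraph `G(A)`, given by its list of visited nodes: consecutive nodes must
be joined by an arc, i.e. have weight `≠ −∞`. -/
def IsWalk {n : ℕ} (A : Matrix (Fin n) (Fin n) Trop) (p : List (Fin n)) : Prop :=
  p.Chain' (fun i j => A i j ≠ ⊥)

/-- The weight of a walk: sum of the weights of its arcs. -/
def walkWeight {n : ℕ} (A : Matrix (Fin n) (Fin n) Trop) (p : List (Fin n)) : Trop :=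
  ((p.zip p.tail).map (fun q => A q.1 q.2)).sum

/-- The set of nodes on the cycle of the permutation `τ` containing `i`. -/
noncomputable def cycFinset {n : ℕ} (τ : Equiv.Perm (Fin n)) (i : Fin n) : Finset (Fin n) :=
  Finset.univ.filter (fun j => τ.SameCycle i j)

/-- `μ_i`: the average weight of the unique cycle of `τ` containing `i`. -/
noncomputable def mu {n : ℕ} (A : Matrix (Fin n) (Fin n) Trop) (τ : Equiv.Perm (Fin n))
    (i : Fin n) : ℝ :=
  (∑ j ∈ cycFinset τ i, (A j (τ j)).unbotD 0) / (cycFinset τ i).card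

/-- Upper triangular tropical matrix: all entries below the diagonal are `−∞`. -/
def UpperTri {n : ℕ} (A : Matrix (Fin n) (Fin n) Trop) : Prop :=
  ∀ i j : Fin n, j < i → A i j = ⊥

/-- Word substitution: replace each letter `a` (`= true`) of `w` by `w₁` and each letter
`b` (`= false`) by `w₂`. -/
def subst (w w₁ w₂ : List Bool) : List Bool :=
  w.flatMap (fun x => if x then w₁ else w₂)

/-- `k`-fold concatenation `w^k` of a word. -/
def wpow (w : List Bool) : ℕ → List Bool
  | 0 => []
  | t + 1 => w ++ wpow w t

/-- Evaluation of a word over an alphabet `α` in a semigroup `S` under the assignment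
`f : α → S`; returns `none` on the empty word. -/
def aEval {S : Type*} [Mul S] {α : Type*} (f : α → S) : List α → Option S
  | [] => none
  | x :: w => some (w.foldl (fun acc y => acc * f y) (f x))

/-! ### Auxiliary lemmas for Statement 6 -/

section Aux

open Function

lemma trop_coe_sum {β : Type*} (s : Finset β) (f : β → ℝ) :
    ((∑ x ∈ s, f x : ℝ) : Trop) = ∑ x ∈ s, ((f x : ℝ) : Trop) := by
  classical
  induction s using Finset.cons_induction with
  | empty => simp
  | cons a s ha ih => simp [Finset.sum_cons, ih, WithBot.coe_add]

lemma trop_sum_ne_bot {β : Type*} (s : Finset β) (f : β → Trop) (h : ∑ x ∈ s, f x ≠ ⊥) :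
    ∀ x ∈ s, f x ≠ ⊥ := by
  classical
  induction s using Finset.cons_induction with
  | empty => simp
  | cons a s ha ih =>
    rw [Finset.sum_cons] at h
    intro x hx
    rcases Finset.mem_cons.mp hx with rfl | hx
    · intro hb; rw [hb] at h; simp [WithBot.add_eq_bot] at h
    · exact ih (fun hb => h (by rw [WithBot.add_eq_bot]; exact Or.inr hb)) x hx

lemma trop_unbot'_coe {x : Trop} (h : x ≠ ⊥) : ((x.unbotD 0 : ℝ) : Trop) = x := by
  cases x with
  | none => exact absurd rfl h
  | some r => rfl

lemma walkWeight_cons_cons {n : ℕ} (A : Matrix (Fin n) (Fin n) Trop) (x y : Fin n)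
    (p : List (Fin n)) : walkWeight A (x :: y :: p) = A x y + walkWeight A (y :: p) := rfl

lemma walkWeight_range {n : ℕ} (A : Matrix (Fin n) (Fin n) Trop) :
    ∀ (m : ℕ) (g : ℕ → Fin n),
      walkWeight A ((List.range (m + 1)).map g) = ∑ t ∈ Finset.range m, A (g t) (g (t + 1)) := by
  intro m
  induction m with
  | zero => intro g; simp [walkWeight, List.range_succ]
  | succ m ih =>
    intro g
    have h2 : (List.range (m + 1)).map (fun t => g (t + 1)) =
        g 1 :: (List.range m).map (fun t => g (t + 2)) := by
      rw [List.range_succ_eq_map]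
      simp [List.map_map, Function.comp]
    have h1 : (List.range (m + 2)).map g = g 0 :: (List.range (m + 1)).map (fun t => g (t + 1)) := by
      rw [List.range_succ_eq_map]
      simp [List.map_map, Function.comp]
    rw [h1, h2, walkWeight_cons_cons, ← h2, ih (fun t => g (t + 1)),
      Finset.sum_range_succ']
    rw [add_comm]

lemma isWalk_range {n : ℕ} (A : Matrix (Fin n) (Fin n) Trop) (m : ℕ) (g : ℕ → Fin n)
    (h : ∀ t < m, A (g t) (g (t + 1)) ≠ ⊥) : IsWalk A ((List.range (m + 1)).map g) := by
  show List.IsChain _ _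
  rw [List.isChain_map, List.isChain_range_succ]
  exact h

variable {n : ℕ} (π : Equiv.Perm (Fin n)) (i : Fin n)

lemma perm_mem_periodicPts : i ∈ periodicPts ⇑π := by
  refine ⟨orderOf π, orderOf_pos π, ?_⟩
  show π^[orderOf π] i = i
  rw [Equiv.Perm.iterate_eq_pow, pow_orderOf_eq_one]
  rfl

lemma perm_minper_pos : 0 < Function.minimalPeriod ⇑π i :=
  Function.minimalPeriod_pos_of_mem_periodicPts (perm_mem_periodicPts π i)

lemma perm_iter_minper : π^[Function.minimalPeriod ⇑π i] i = i :=
  Function.isPeriodicPt_minimalPeriod ⇑π i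

/-- The orbit of `i` under `π`, as a list. -/
noncomputable def orbitList : List (Fin n) :=
  (List.range (Function.minimalPeriod ⇑π i)).map (fun t => π^[t] i)

lemma orbitList_nodup : (orbitList π i).Nodup := by
  refine List.Nodup.map_on ?_ List.nodup_range
  intro x hx y hy hxy
  exact Function.iterate_injOn_Iio_minimalPeriod (by simpa using hx) (by simpa using hy) hxy

lemma mem_orbitList (j : Fin n) : j ∈ orbitList π i ↔ π.SameCycle i j := by
  simp only [orbitList, List.mem_map, List.mem_range]
  constructor
  · rintro ⟨t, ht, rfl⟩
    exact ⟨t, by rw [zpow_natCast]; exact (Equiv.Perm.iterate_eq_pow π t ▸ rfl :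
      (π ^ t) i = π^[t] i).symm⟩
  · intro h
    obtain ⟨t, ht, hpow⟩ := h.exists_pow_eq'
    refine ⟨t % Function.minimalPeriod ⇑π i, Nat.mod_lt _ (perm_minper_pos π i), ?_⟩
    rw [Function.iterate_mod_minimalPeriod_eq]
    rw [← hpow, Equiv.Perm.iterate_eq_pow]

lemma iterate_mem_orbitList (t : ℕ) : π^[t] i ∈ orbitList π i := by
  rw [mem_orbitList]
  exact ⟨t, by rw [zpow_natCast]; exact (Equiv.Perm.iterate_eq_pow π t ▸ rfl :
    (π ^ t) i = π^[t] i)⟩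

lemma orbitList_map_rotate (τ : Equiv.Perm (Fin n)) :
    ((orbitList π i).map τ = (orbitList π i).rotate 1) ↔
      ∀ j ∈ orbitList π i, τ j = π j := by
  set k := Function.minimalPeriod ⇑π i with hk
  set L := orbitList π i with hL
  have hrot : L.rotate 1 = L.map π := by
    have hlen : L.length = k := by simp [hL, orbitList, hk]
    apply List.ext_get
    · simp
    intro m h1 h2
    rw [List.get_rotate]
    have e1 : ∀ (t : ℕ) (ht : t < L.length), L.get ⟨t, ht⟩ = π^[t] i := by
      intro t ht
      simp [hL, orbitList]
    have gm : ∀ (l : List (Fin n)) (f : Fin n → Fin n) (m : ℕ) (h : m < (l.map f).length),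
        (l.map f).get ⟨m, h⟩ = f (l.get ⟨m, by simpa using h⟩) := fun l f m h => by simp
    rw [e1, gm, e1, ← Function.iterate_succ_apply' π, hlen, hk]
    exact Function.iterate_mod_minimalPeriod_eq
  rw [hrot, List.map_inj_left]

end Aux

section Aux2

open Function

variable {n : ℕ}

lemma orbit_eq_cycFinset (τ π : Equiv.Perm (Fin n)) (i : Fin n)
    (h : ∀ j ∈ (orbitList π i).toFinset, τ j = π j) :
    (orbitList π i).toFinset = cycFinset τ i := by
  have hiter : ∀ t : ℕ, τ^[t] i = π^[t] i := by
    intro t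
    induction t with
    | zero => rfl
    | succ t ih =>
      rw [Function.iterate_succ_apply', Function.iterate_succ_apply', ih,
        h _ (List.mem_toFinset.mpr (iterate_mem_orbitList π i t))]
  ext j
  rw [List.mem_toFinset, mem_orbitList, cycFinset, Finset.mem_filter]
  constructor
  · intro hs
    obtain ⟨t, ht, hpow⟩ := hs.exists_pow_eq'
    refine ⟨Finset.mem_univ _, ⟨t, ?_⟩⟩
    rw [zpow_natCast, ← hpow]
    show (τ ^ t) i = (π ^ t) i
    rw [← Equiv.Perm.iterate_eq_pow, ← Equiv.Perm.iterate_eq_pow]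
    exact hiter t
  · rintro ⟨-, hs⟩
    obtain ⟨t, ht, hpow⟩ := hs.exists_pow_eq'
    refine ⟨t, ?_⟩
    rw [zpow_natCast, ← hpow]
    show (π ^ t) i = (τ ^ t) i
    rw [← Equiv.Perm.iterate_eq_pow, ← Equiv.Perm.iterate_eq_pow]
    exact (hiter t).symm

lemma cycFinset_eq_of_mem (τ : Equiv.Perm (Fin n)) {i j : Fin n} (h : τ.SameCycle i j) :
    cycFinset τ j = cycFinset τ i := by
  ext x
  simp only [cycFinset, Finset.mem_filter, Finset.mem_univ, true_and]
  exact ⟨fun hx => h.trans hx, fun hx => h.symm.trans hx⟩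

lemma sum_mu_orbit (A : Matrix (Fin n) (Fin n) Trop) (τ : Equiv.Perm (Fin n)) (i : Fin n) :
    ∑ j ∈ cycFinset τ i, mu A τ j = ∑ j ∈ cycFinset τ i, (A j (τ j)).unbotD 0 := by
  have hicard : 0 < (cycFinset τ i).card := by
    refine Finset.card_pos.mpr ⟨i, ?_⟩
    simp [cycFinset, Equiv.Perm.SameCycle.refl]
  have : ∀ j ∈ cycFinset τ i, mu A τ j =
      (∑ x ∈ cycFinset τ i, (A x (τ x)).unbotD 0) / (cycFinset τ i).card := by
    intro j hj
    have hs : τ.SameCycle i j := by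
      simpa [cycFinset] using hj
    rw [mu, cycFinset_eq_of_mem τ hs]
  rw [Finset.sum_congr rfl this, Finset.sum_const, nsmul_eq_mul]
  field_simp

end Aux2

section Aux3

open Function

variable {n : ℕ}

lemma sum_range_list (k : ℕ) (f : ℕ → ℝ) :
    ∑ t ∈ Finset.range k, f t = ((List.range k).map f).sum := rfl

lemma orbit_key (A : Matrix (Fin n) (Fin n) Trop) (τ π : Equiv.Perm (Fin n))
    (hπ : ∀ j, A j (π j) ≠ ⊥)
    (hcyc : ∀ (i : Fin n) (c : List (Fin n)),
      (i :: c).Nodup →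
      IsWalk A (i :: c ++ [i]) →
      (i :: c).map τ ≠ (i :: c).rotate 1 →
      walkWeight A (i :: c ++ [i]) < ((((i :: c).map (mu A τ)).sum : ℝ) : Trop))
    (i : Fin n) :
    ((∀ j ∈ (orbitList π i).toFinset, τ j = π j) →
      ∑ j ∈ (orbitList π i).toFinset, (A j (π j)).unbotD 0 =
        ∑ j ∈ (orbitList π i).toFinset, mu A τ j) ∧
    ((∃ j ∈ (orbitList π i).toFinset, τ j ≠ π j) →
      ∑ j ∈ (orbitList π i).toFinset, (A j (π j)).unbotD 0 <
        ∑ j ∈ (orbitList π i).toFinset, mu A τ j) := by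
  classical
  constructor
  · -- equality case
    intro h
    have hO : (orbitList π i).toFinset = cycFinset τ i := orbit_eq_cycFinset τ π i h
    have hb : ∀ j ∈ (orbitList π i).toFinset,
        (A j (π j)).unbotD 0 = (A j (τ j)).unbotD 0 := by
      intro j hj; rw [h j hj]
    rw [Finset.sum_congr rfl hb, hO, ← sum_mu_orbit A τ i]
  · -- strict case
    rintro ⟨j₀, hj₀, hne⟩
    obtain ⟨k', hk'⟩ : ∃ k', Function.minimalPeriod ⇑π i = k' + 1 :=
      Nat.exists_eq_succ_of_ne_zero (Nat.pos_iff_ne_zero.mp (perm_minper_pos π i))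
    set c : List (Fin n) := (List.range k').map (fun t => π^[t + 1] i) with hcdef
    have hLic : orbitList π i = i :: c := by
      rw [orbitList, hk', List.range_succ_eq_map]
      simp only [List.map_cons, Function.iterate_zero_apply, List.map_map, hcdef]
      congr 1
    have happend : i :: c ++ [i] =
        (List.range (Function.minimalPeriod ⇑π i + 1)).map (fun t => π^[t] i) := by
      rw [List.range_succ, List.map_append, ← orbitList, hLic]
      simp only [List.map_cons, List.map_nil]
      rw [perm_iter_minper π i]
    have hwalk : IsWalk A (i :: c ++ [i]) := by
      rw [happend]
      apply isWalk_range
      intro t ht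
      rw [Function.iterate_succ_apply']
      exact hπ _
    have hnrot : (i :: c).map τ ≠ (i :: c).rotate 1 := by
      intro heq
      rw [← hLic] at heq
      exact hne ((orbitList_map_rotate π i τ).mp heq j₀ (List.mem_toFinset.mp hj₀))
    have hlt := hcyc i c (hLic ▸ orbitList_nodup π i) hwalk hnrot
    have hww : walkWeight A (i :: c ++ [i]) =
        ((∑ j ∈ (orbitList π i).toFinset, (A j (π j)).unbotD 0 : ℝ) : Trop) := by
      rw [happend, walkWeight_range]
      have e1 : ∀ t ∈ Finset.range (Function.minimalPeriod ⇑π i),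
          A (π^[t] i) (π^[t + 1] i) =
          (((A (π^[t] i) (π (π^[t] i))).unbotD 0 : ℝ) : Trop) := by
        intro t ht
        rw [Function.iterate_succ_apply', trop_unbot'_coe (hπ _)]
      rw [Finset.sum_congr rfl e1, ← trop_coe_sum]
      congr 1
      rw [List.sum_toFinset _ (orbitList_nodup π i), sum_range_list, orbitList, List.map_map]
      rfl
    have hmu : (((i :: c).map (mu A τ)).sum : ℝ) = ∑ j ∈ (orbitList π i).toFinset, mu A τ j := by
      rw [← hLic, List.sum_toFinset _ (orbitList_nodup π i)]
    rw [hww, hmu] at hlt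
    exact WithBot.coe_lt_coe.mp hlt

end Aux3

section Aux4

open Function

variable {n : ℕ}

lemma sum_orbit_induction (A : Matrix (Fin n) (Fin n) Trop) (τ π : Equiv.Perm (Fin n))
    (hπ : ∀ j, A j (π j) ≠ ⊥)
    (hcyc : ∀ (i : Fin n) (c : List (Fin n)),
      (i :: c).Nodup →
      IsWalk A (i :: c ++ [i]) →
      (i :: c).map τ ≠ (i :: c).rotate 1 →
      walkWeight A (i :: c ++ [i]) < ((((i :: c).map (mu A τ)).sum : ℝ) : Trop))
    (s : Finset (Fin n)) :
    (∀ j ∈ s, π j ∈ s) →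
      ((∀ j ∈ s, τ j = π j) →
        ∑ j ∈ s, (A j (π j)).unbotD 0 = ∑ j ∈ s, mu A τ j) ∧
      ((∃ j ∈ s, τ j ≠ π j) →
        ∑ j ∈ s, (A j (π j)).unbotD 0 < ∑ j ∈ s, mu A τ j) := by
  classical
  induction s using Finset.strongInduction with
  | _ s ih =>
  intro hs
  -- orbit of any i ∈ s is contained in s
  have hiter : ∀ i ∈ s, ∀ t : ℕ, π^[t] i ∈ s := by
    intro i hi t
    induction t with
    | zero => exact hi
    | succ t ih' => rw [Function.iterate_succ_apply']; exact hs _ ih'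
  have horb : ∀ i ∈ s, (orbitList π i).toFinset ⊆ s := by
    intro i hi j hj
    rw [List.mem_toFinset, mem_orbitList] at hj
    obtain ⟨t, ht, rfl⟩ := hj.exists_pow_eq'
    rw [← Equiv.Perm.iterate_eq_pow]
    exact hiter i hi t
  have hself : ∀ i : Fin n, i ∈ (orbitList π i).toFinset := by
    intro i
    rw [List.mem_toFinset, mem_orbitList]
  have hinv : ∀ i ∈ s, ∀ j ∈ s \ (orbitList π i).toFinset,
      π j ∈ s \ (orbitList π i).toFinset := by
    intro i hi j hj
    rw [Finset.mem_sdiff] at hj ⊢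
    refine ⟨hs _ hj.1, fun hmem => hj.2 ?_⟩
    rw [List.mem_toFinset, mem_orbitList] at hmem ⊢
    exact (Equiv.Perm.sameCycle_apply_right).mp hmem
  have hssub : ∀ i ∈ s, s \ (orbitList π i).toFinset ⊂ s := by
    intro i hi
    exact Finset.sdiff_ssubset (horb i hi) ⟨i, hself i⟩
  constructor
  · intro hall
    rcases s.eq_empty_or_nonempty with rfl | ⟨i, hi⟩
    · simp
    · have hOs := horb i hi
      have h1 := ((orbit_key A τ π hπ hcyc i).1 (fun j hj => hall j (hOs hj)))
      have h2 := ((ih _ (hssub i hi) (hinv i hi)).1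
        (fun j hj => hall j (Finset.mem_sdiff.mp hj).1))
      rw [← Finset.sum_sdiff hOs, ← Finset.sum_sdiff hOs (f := mu A τ), h1, h2]
  · rintro ⟨i, hi, hne⟩
    have hOs := horb i hi
    have h1 := ((orbit_key A τ π hπ hcyc i).2 ⟨i, hself i, hne⟩)
    have h2 : ∑ j ∈ s \ (orbitList π i).toFinset, (A j (π j)).unbotD 0 ≤
        ∑ j ∈ s \ (orbitList π i).toFinset, mu A τ j := by
      by_cases hall : ∀ j ∈ s \ (orbitList π i).toFinset, τ j = π j
      · exact le_of_eq ((ih _ (hssub i hi) (hinv i hi)).1 hall)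
      · push_neg at hall
        exact le_of_lt ((ih _ (hssub i hi) (hinv i hi)).2 hall)
    rw [← Finset.sum_sdiff hOs, ← Finset.sum_sdiff hOs (f := mu A τ)]
    exact add_lt_add_of_le_of_lt h2 h1

end Aux4

/-- cycles-to-permutation lemma.  A simple cycle of `G(A)` is encoded by a
nonempty list `i :: c` of pairwise distinct nodes such that the closed walk
`i :: c ++ [i]` uses only arcs of `G(A)`; it is a cycle of `τ` precisely when `τ` maps each
of its nodes to the next one, i.e. `(i :: c).map τ = (i :: c).rotate 1`.  If every simple
cycle of `G(A)` which is not a cycle of `τ` has weight strictly less than the sum of the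
`μ`-values of its nodes, then `A` is nonsingular and `τ` is the unique permutation attaining
`per(A)`. -/
theorem nonsingular_of_cycle_bound {n : ℕ} (A : Matrix (Fin n) (Fin n) Trop)
    (τ : Equiv.Perm (Fin n)) (hτ : permWeight A τ ≠ ⊥)
    (hcyc : ∀ (i : Fin n) (c : List (Fin n)),
      (i :: c).Nodup →
      IsWalk A (i :: c ++ [i]) →
      (i :: c).map τ ≠ (i :: c).rotate 1 →
      walkWeight A (i :: c ++ [i]) < ((((i :: c).map (mu A τ)).sum : ℝ) : Trop)) :
    Nonsingular A ∧ ∀ π : Equiv.Perm (Fin n), permWeight A π = tPer A → π = τ := by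
  classical
  have hτall : ∀ j, A j (τ j) ≠ ⊥ :=
    fun j => trop_sum_ne_bot Finset.univ _ hτ j (Finset.mem_univ j)
  have hamu : ∑ j, (A j (τ j)).unbotD 0 = ∑ j, mu A τ j :=
    (sum_orbit_induction A τ τ hτall hcyc Finset.univ (fun j _ => Finset.mem_univ _)).1
      (fun _ _ => rfl)
  have hwτ : permWeight A τ = ((∑ j, (A j (τ j)).unbotD 0 : ℝ) : Trop) := by
    rw [permWeight, trop_coe_sum]
    exact Finset.sum_congr rfl fun j _ => (trop_unbot'_coe (hτall j)).symm
  have hmax : ∀ π : Equiv.Perm (Fin n), π ≠ τ → permWeight A π < permWeight A τ := by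
    intro π hneq
    by_cases hπb : permWeight A π = ⊥
    · rw [hπb]
      exact Ne.bot_lt hτ
    · have hπall : ∀ j, A j (π j) ≠ ⊥ :=
        fun j => trop_sum_ne_bot Finset.univ _ hπb j (Finset.mem_univ j)
      have hwit : ∃ j ∈ Finset.univ, τ j ≠ π j := by
        by_contra h
        push_neg at h
        exact hneq (Equiv.ext fun x => (h x (Finset.mem_univ x)).symm)
      have hlt := (sum_orbit_induction A τ π hπall hcyc Finset.univ
        (fun j _ => Finset.mem_univ _)).2 hwit
      have hwπ : permWeight A π = ((∑ j, (A j (π j)).unbotD 0 : ℝ) : Trop) := by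
        rw [permWeight, trop_coe_sum]
        exact Finset.sum_congr rfl fun j _ => (trop_unbot'_coe (hπall j)).symm
      rw [hwπ, hwτ]
      exact WithBot.coe_lt_coe.mpr (by rw [hamu]; exact hlt)
  have hper : tPer A = permWeight A τ := by
    refine le_antisymm (Finset.sup_le fun π _ => ?_) (Finset.le_sup (Finset.mem_univ τ))
    by_cases hp : π = τ
    · rw [hp]
    · exact (hmax π hp).le
  refine ⟨⟨τ, hper.symm, fun π hp => ?_⟩, fun π hp => ?_⟩ <;>
  · by_contra hne
    exact absurd (hp.trans hper) (hmax π hne).ne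
end

section
/- Let n ≥ 2. If a semigroup S satisfies a nontrivial semigroup identity (u,v) in which u and v involve at most n different letters, then S also satisfies a nontrivial 2-letter semigroup identity of the same length, where the length of an identity (u,v) is max(ℓ(u), ℓ(v)). -/
attribute [local instance] Classical.propDecidable

private lemma aEval_map {S : Type*} [Mul S] {α : Type*} (g : Bool → S) (σ : α → Bool)
    (u : List α) : aEval g (u.map σ) = aEval (g ∘ σ) u := by
  cases u with
  | nil => rfl
  | cons x w => simp [aEval, List.foldl_map, Function.comp]

/-- reduction to two letters.  If a semigroup `S` satisfies a nontrivial
`n`-letter identity `(u, v)` (for `n ≥ 2`), then it satisfies a nontrivial 2-letter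
identity of the same length, the length of an identity being `max(ℓ(u), ℓ(v))`.  Here a
semigroup satisfies `(u, v)` iff every assignment of the letters gives equal evaluations. -/
theorem two_letter_identity {S : Type*} [Semigroup S] {α : Type*} [Fintype α] [DecidableEq α]
    (n : ℕ) (hn : 2 ≤ n)
    (u v : List α) (hu : u ≠ []) (hv : v ≠ []) (huv : u ≠ v)
    (hletters : (u.toFinset ∪ v.toFinset).card ≤ n)
    (hid : ∀ f : α → S, aEval f u = aEval f v) :
    ∃ u' v' : List Bool, u' ≠ [] ∧ v' ≠ [] ∧ u' ≠ v' ∧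
      max u'.length v'.length = max u.length v.length ∧
      ∀ s t : S, aEval (fun x : Bool => if x then s else t) u' =
        aEval (fun x : Bool => if x then s else t) v' := by
  by_cases hlen : u.length = v.length
  · have hdiff : ∃ i : ℕ, ∃ h1 : i < u.length, ∃ h2 : i < v.length,
        u.get ⟨i, h1⟩ ≠ v.get ⟨i, h2⟩ := by
      by_contra h
      push_neg at h
      exact huv (List.ext_get hlen fun i h1 h2 => h i h1 h2)
    obtain ⟨i, h1, h2, hne⟩ := hdiff
    set σ : α → Bool := fun x => decide (x = u.get ⟨i, h1⟩) with hσ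
    refine ⟨u.map σ, v.map σ, by simpa using hu, by simpa using hv, ?_, by simp, ?_⟩
    · intro h
      have := congrArg (fun l => l[i]?) h
      simp only [List.getElem?_map] at this
      rw [List.getElem?_eq_getElem h1, List.getElem?_eq_getElem h2] at this
      simp only [Option.map_some] at this
      change some (σ (u.get ⟨i, h1⟩)) = some (σ (v.get ⟨i, h2⟩)) at this
      apply hne
      have hu' : σ (u.get ⟨i, h1⟩) = true := by simp [hσ]
      have := Option.some.inj this
      rw [hu'] at this
      by_contra hcc
      have hv' : σ (v.get ⟨i, h2⟩) = false := by simp [hσ]; exact fun hh => hcc hh.symm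
      rw [hv'] at this
      exact Bool.noConfusion this
    · intro s t
      rw [aEval_map, aEval_map]
      exact hid _
  · refine ⟨u.map (fun _ => true), v.map (fun _ => true), by simpa using hu,
      by simpa using hv, ?_, by simp, ?_⟩
    · intro h
      exact hlen (by simpa using congrArg List.length h)
    · intro s t
      rw [aEval_map, aEval_map]
      exact hid _
end
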